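/- Let n ≥ 2, and let p, q ∈ ℂ with |p|² + |q|² = 1. For ζ with qζ + p ≠ 0 set ζ̃ = (conj(p)ζ − conj(q))/(qζ + p), and for η ∈ ℂ set η̃ = η/(qζ + p)². Let P : ℂ × ℂ → ℂ be differentiable in its first argument and suppose the invariance P(η̃, ζ̃) = P(η, ζ)·(qζ+p)^{−2n} holds for all η ∈ ℂ and all ζ with qζ + p ≠ 0. Then: (i) ∂₁P(η̃, ζ̃) = ∂₁P(η,ζ)·(qζ+p)^{−(2n−2)}; and (ii) for all natural numbers r, s and all η, ζ with qζ + p ≠ 0 and ∂₁P(η,ζ) ≠ 0, ζ̃ʳ η̃ˢ · (qζ+p)^{−2} / ∂₁P(η̃,ζ̃) = (conj(p)ζ − conj(q))ʳ · (qζ+p)^{2n−4−r−2s} · ηˢ / ∂₁P(η,ζ), where the power (qζ+p)^{2n−4−r−2s} is an integer power. (This expresses that under the rotation (η,ζ) ↦ (η̃,ζ̃) the differential ζʳηˢ dζ/∂_ηP pulls back to (conj(p)ζ−conj(q))ʳ(qζ+p)^{2n−4−r−2s}ηˢ dζ/∂_ηP, using dζ̃/dζ = (qζ+p)^{−2}.)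 -/

import Mathlib

open Complex

/-- Behaviour of the differentials `ζʳηˢ dζ/∂_ηP` under the rotation
`ζ̃ = (conj(p)ζ − conj(q))/(qζ + p)`, `η̃ = η/(qζ + p)²` with `|p|² + |q|² = 1`, given the
invariance `P(η̃, ζ̃) = P(η,ζ)(qζ+p)^{−2n}`:
(i) `∂₁P(η̃, ζ̃) = ∂₁P(η,ζ)(qζ+p)^{−(2n−2)}`;
(ii) `ζ̃ʳ η̃ˢ (qζ+p)^{−2}/∂₁P(η̃,ζ̃) = (conj(p)ζ−conj(q))ʳ (qζ+p)^{2n−4−r−2s} ηˢ/∂₁P(η,ζ)`. -/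
theorem stmt12 (n : ℕ) (hn : 2 ≤ n) (p q : ℂ)
    (hpq : ‖p‖ ^ 2 + ‖q‖ ^ 2 = 1)
    (P : ℂ → ℂ → ℂ)
    (hdiff : ∀ ζ η : ℂ, DifferentiableAt ℂ (fun η' => P η' ζ) η)
    (hinv : ∀ η ζ : ℂ, q * ζ + p ≠ 0 →
      P (η / (q * ζ + p) ^ 2) (((starRingEnd ℂ) p * ζ - (starRingEnd ℂ) q) / (q * ζ + p))
        = P η ζ * (q * ζ + p) ^ (-(2 * (n : ℤ)))) :
    (∀ η ζ : ℂ, q * ζ + p ≠ 0 →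
      deriv (fun η' => P η' (((starRingEnd ℂ) p * ζ - (starRingEnd ℂ) q) / (q * ζ + p)))
          (η / (q * ζ + p) ^ 2)
        = deriv (fun η' => P η' ζ) η * (q * ζ + p) ^ (-(2 * (n : ℤ) - 2))) ∧
    (∀ (r s : ℕ) (η ζ : ℂ), q * ζ + p ≠ 0 → deriv (fun η' => P η' ζ) η ≠ 0 →
      (((starRingEnd ℂ) p * ζ - (starRingEnd ℂ) q) / (q * ζ + p)) ^ r
          * (η / (q * ζ + p) ^ 2) ^ s * (q * ζ + p) ^ (-2 : ℤ)
          / deriv (fun η' => P η' (((starRingEnd ℂ) p * ζ - (starRingEnd ℂ) q) / (q * ζ + p)))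
              (η / (q * ζ + p) ^ 2)
        = ((starRingEnd ℂ) p * ζ - (starRingEnd ℂ) q) ^ r
            * (q * ζ + p) ^ (2 * (n : ℤ) - 4 - (r : ℤ) - 2 * (s : ℤ)) * η ^ s
            / deriv (fun η' => P η' ζ) η) := by
  have key : ∀ η ζ : ℂ, q * ζ + p ≠ 0 →
      deriv (fun η' => P η' (((starRingEnd ℂ) p * ζ - (starRingEnd ℂ) q) / (q * ζ + p)))
          (η / (q * ζ + p) ^ 2)
        = deriv (fun η' => P η' ζ) η * (q * ζ + p) ^ (-(2 * (n : ℤ) - 2)) := by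
    intro η ζ hc
    set c := q * ζ + p with hcdef
    have hc2 : c ^ 2 ≠ 0 := pow_ne_zero _ hc
    set ζt := ((starRingEnd ℂ) p * ζ - (starRingEnd ℂ) q) / c with hztdef
    have h1 : HasDerivAt (fun η' => P η' ζt)
        (deriv (fun η' => P η' ζt) (η / c ^ 2)) (η / c ^ 2) :=
      (hdiff ζt _).hasDerivAt
    have h2 : HasDerivAt (fun η' : ℂ => η' / c ^ 2) ((c ^ 2)⁻¹) η := by
      simpa [div_eq_mul_inv] using (hasDerivAt_id η).mul_const ((c ^ 2)⁻¹)
    have h3 := h1.comp η h2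
    have heq : ((fun η' => P η' ζt) ∘ fun η' : ℂ => η' / c ^ 2)
        = fun η' => P η' ζ * c ^ (-(2 * (n : ℤ))) := by
      funext η'; exact hinv η' ζ hc
    rw [heq] at h3
    have h4 : HasDerivAt (fun η' => P η' ζ * c ^ (-(2 * (n : ℤ))))
        (deriv (fun η' => P η' ζ) η * c ^ (-(2 * (n : ℤ)))) η :=
      ((hdiff ζ η).hasDerivAt).mul_const _
    have h5 := h3.unique h4
    rw [← div_eq_mul_inv, div_eq_iff hc2] at h5
    rw [h5, mul_assoc]
    congr 1
    rw [← zpow_natCast c 2, ← zpow_add₀ hc]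
    congr 1
    ring
  refine ⟨key, ?_⟩
  intro r s η ζ hc hD
  rw [key η ζ hc]
  set c := q * ζ + p with hcdef
  set A := (starRingEnd ℂ) p * ζ - (starRingEnd ℂ) q with hAdef
  set D := deriv (fun η' => P η' ζ) η with hDdef
  have h1 : (A / c) ^ r = A ^ r * c ^ (-(r : ℤ)) := by
    rw [div_pow, ← zpow_natCast c r, div_eq_mul_inv, ← zpow_neg]
  have h2 : (η / c ^ 2) ^ s = η ^ s * c ^ (-((2 * s : ℕ) : ℤ)) := by
    rw [div_pow, ← pow_mul, ← zpow_natCast c (2 * s), div_eq_mul_inv, ← zpow_neg]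
  have hpow : c ^ (-(r : ℤ)) * c ^ (-((2 * s : ℕ) : ℤ)) * c ^ (-2 : ℤ)
      = c ^ (2 * (n : ℤ) - 4 - (r : ℤ) - 2 * (s : ℤ)) * c ^ (-(2 * (n : ℤ) - 2)) := by
    rw [← zpow_add₀ hc, ← zpow_add₀ hc, ← zpow_add₀ hc]
    congr 1
    push_cast
    ring
  rw [h1, h2, div_eq_div_iff (mul_ne_zero hD (zpow_ne_zero _ hc)) hD]
  linear_combination A ^ r * η ^ s * D * hpow
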